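/- For positive integers a, b, c and a positive integer m not a perfect square, the pair (a√m, b+c√m) generates the unit ideal in ℤ[√m] if and only if gcd(am, b² - c²m) = 1. -/

import Mathlib

/-- `x` lies in `ℤ[√m] ⊆ ℝ`. -/
def inZsqrt (m : ℤ) (x : ℝ) : Prop := ∃ p q : ℤ, x = p + q * Real.sqrt m

theorem stmt_10 (m a b c : ℤ) (hm : 0 < m) (hsq : ¬ IsSquare m)
    (ha : 0 < a) (hb : 0 < b) (hc : 0 < c) :
    (∃ x y : ℝ, inZsqrt m x ∧ inZsqrt m y ∧
        (a : ℝ) * Real.sqrt m * x + ((b : ℝ) + c * Real.sqrt m) * y = 1) ↔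
      Int.gcd (a * m) (b ^ 2 - c ^ 2 * m) = 1 := by
  have hirr : Irrational (Real.sqrt m) :=
    (irrational_sqrt_intCast_iff_of_nonneg hm.le).2 hsq
  have hsqm : Real.sqrt m * Real.sqrt m = (m : ℝ) :=
    Real.mul_self_sqrt (by positivity)
  constructor
  · rintro ⟨x, y, ⟨p, q, rfl⟩, ⟨r, s, rfl⟩, hxy⟩
    -- extract integer equations
    have key : ((a*q*m + b*r + c*s*m : ℤ) : ℝ) + ((a*p + b*s + c*r : ℤ) : ℝ) * Real.sqrt m
        = 1 := by
      push_cast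
      linear_combination hxy - ((a:ℝ)*q + c*s) * hsqm
    set A : ℤ := a*q*m + b*r + c*s*m
    set B : ℤ := a*p + b*s + c*r
    have hB : B = 0 := by
      by_contra hB
      have : Real.sqrt m = ((1 - A : ℤ) : ℝ) / ((B : ℤ) : ℝ) := by
        have hBne : ((B : ℤ) : ℝ) ≠ 0 := Int.cast_ne_zero.2 hB
        field_simp
        push_cast
        linarith [key]
      exact hirr ⟨((1 - A : ℚ) / B : ℚ), by push_cast [this]; norm_num⟩
    have hA : A = 1 := by
      have := key
      rw [hB] at this
      simp at this
      exact_mod_cast this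
    -- Bezout identity
    rw [← Int.isCoprime_iff_gcd_eq_one]
    refine ⟨2*q + a*p^2 - a*q^2*m, r^2 - s^2*m, ?_⟩
    have h1 : a*q*m + b*r + c*s*m = 1 := hA
    have h2 : a*p + b*s + c*r = 0 := hB
    linear_combination ((1 - a*q*m) + (b*r + c*s*m)) * h1 - m*(b*s + c*r - a*p) * h2
  · intro hgcd
    obtain ⟨u, v, huv⟩ := Int.isCoprime_iff_gcd_eq_one.2 hgcd
    refine ⟨u * Real.sqrt m, v * ((b : ℝ) - c * Real.sqrt m),
      ⟨0, u, by push_cast; ring⟩, ⟨v*b, -(v*c), by push_cast; ring⟩, ?_⟩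
    have : (a : ℝ) * Real.sqrt m * (u * Real.sqrt m) +
        ((b : ℝ) + c * Real.sqrt m) * (v * ((b : ℝ) - c * Real.sqrt m))
        = u * (a*m) + v * ((b:ℝ)^2 - c^2*m) := by
      linear_combination ((a:ℝ)*u - (c:ℝ)^2*v) * hsqm
    rw [this]
    exact_mod_cast congrArg (fun z : ℤ => (z : ℝ)) huv
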